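/- arXiv:2510.23309 — 3 statements merged into one kernel-verified Lean document; each statement's English description precedes it below -/
import Mathlib

section
/- Let E be a Banach space, 1 < α < 2, and let S_α, T_α be two families of bounded operators of the form S_α(t) = E_α(t^α A), T_α(t) = E_α(t^α B) with A, B bounded. If A = B then S_α(t) = T_α(t) for all t ≥ 0; conversely, if S_α(t) = T_α(t) for all t ≥ 0 then A = B. -/
open Real

/-- Operator-valued one-parameter Mittag-Leffler function. -/
noncomputable def opML {E : Type*} [NormedAddCommGroup E] [NormedSpace ℝ E]
    (α : ℝ) (A : E →L[ℝ] E) (t : ℝ) : E →L[ℝ] E :=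
  ∑' n : ℕ, (t ^ ((n : ℝ) * α) / Real.Gamma (1 + n * α)) • A ^ n

section Aux

variable {E : Type*} [NormedAddCommGroup E] [NormedSpace ℝ E] [CompleteSpace E]

lemma fact_le_gamma {α : ℝ} (hα : 1 < α) (n : ℕ) :
    (n.factorial : ℝ) ≤ Real.Gamma (1 + n * α) := by
  rw [← Real.Gamma_nat_eq_factorial]
  rcases Nat.eq_zero_or_pos n with hn | hn
  · subst hn; norm_num
  · have h1 : (n : ℝ) ≥ 1 := by exact_mod_cast hn
    have h2 : (n : ℝ) + 1 ≤ 1 + n * α := by nlinarith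
    have h3 : (2 : ℝ) ≤ (n : ℝ) + 1 := by linarith
    exact Real.Gamma_strictMonoOn_Ici.monotoneOn (by simpa using h3)
      (by simp only [Set.mem_Ici]; linarith) h2

/-- The coefficient of the Mittag-Leffler power series. -/
noncomputable def mlCoeff (α : ℝ) (A : E →L[ℝ] E) (n : ℕ) : E →L[ℝ] E :=
  (Real.Gamma (1 + n * α))⁻¹ • A ^ n

lemma norm_mlCoeff_le {α : ℝ} (hα : 1 < α) (A : E →L[ℝ] E) (n : ℕ) :
    ‖mlCoeff α A n‖ ≤ ‖A‖ ^ n / n.factorial := by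
  have hΓ : (0 : ℝ) < Real.Gamma (1 + n * α) := by
    apply Real.Gamma_pos_of_pos
    positivity
  have hfact : (0 : ℝ) < n.factorial := by positivity
  have h1 : ‖mlCoeff α A n‖ ≤ (Real.Gamma (1 + n * α))⁻¹ * ‖A‖ ^ n := by
    rw [mlCoeff]
    refine (norm_smul_le ((Real.Gamma (1 + n * α))⁻¹) (A ^ n)).trans ?_
    rw [Real.norm_eq_abs, abs_of_pos (by positivity)]
    have hpow : ‖A ^ n‖ ≤ ‖A‖ ^ n := by
      rcases Nat.eq_zero_or_pos n with hn | hn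
      · subst hn
        simp only [pow_zero]
        exact (ContinuousLinearMap.norm_id_le (𝕜 := ℝ) (E := E) : ‖(1 : E →L[ℝ] E)‖ ≤ 1)
      · exact norm_pow_le' A hn
    exact mul_le_mul_of_nonneg_left hpow (by positivity)
  refine h1.trans ?_
  rw [div_eq_inv_mul]
  exact mul_le_mul_of_nonneg_right (inv_anti₀ hfact (fact_le_gamma hα n))
    (by positivity)

/-- The Mittag-Leffler formal power series. -/
noncomputable def mlSeries (α : ℝ) (A : E →L[ℝ] E) :
    FormalMultilinearSeries ℝ ℝ (E →L[ℝ] E) :=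
  fun n => ContinuousMultilinearMap.mkPiRing ℝ (Fin n) (mlCoeff α A n)

/-- Entire sum of the Mittag-Leffler power series. -/
noncomputable def mlSum (α : ℝ) (A : E →L[ℝ] E) (z : ℝ) : E →L[ℝ] E :=
  ∑' n : ℕ, z ^ n • mlCoeff α A n

lemma mlSummable {α : ℝ} (hα : 1 < α) (A : E →L[ℝ] E) (z : ℝ) :
    Summable (fun n => z ^ n • mlCoeff α A n) := by
  refine Summable.of_norm (Summable.of_nonneg_of_le (fun n => norm_nonneg _)
    (fun n => ?_) (Real.summable_pow_div_factorial (|z| * ‖A‖)))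
  rw [norm_smul (z ^ n) (mlCoeff α A n), Real.norm_eq_abs, abs_pow, mul_pow]
  calc |z| ^ n * ‖mlCoeff α A n‖ ≤ |z| ^ n * (‖A‖ ^ n / n.factorial) :=
        mul_le_mul_of_nonneg_left (norm_mlCoeff_le hα A n) (by positivity)
    _ = |z| ^ n * ‖A‖ ^ n / n.factorial := by ring

lemma mlHasSum {α : ℝ} (hα : 1 < α) (A : E →L[ℝ] E) (z : ℝ) :
    HasSum (fun n => z ^ n • mlCoeff α A n) (mlSum α A z) :=
  (mlSummable hα A z).hasSum

lemma mlSeries_coeff (α : ℝ) (A : E →L[ℝ] E) (n : ℕ) :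
    (mlSeries α A).coeff n = mlCoeff α A n := by
  simp [mlSeries, FormalMultilinearSeries.coeff, ContinuousMultilinearMap.mkPiRing_apply]

lemma mlHasFPowerSeriesAt {α : ℝ} (hα : 1 < α) (A : E →L[ℝ] E) :
    HasFPowerSeriesAt (mlSum α A) (mlSeries α A) 0 := by
  rw [hasFPowerSeriesAt_iff]
  filter_upwards with z
  simpa [mlSeries_coeff] using mlHasSum hα A z

lemma mlHasDerivAt {α : ℝ} (hα : 1 < α) (A : E →L[ℝ] E) :
    HasDerivAt (mlSum α A) ((Real.Gamma (1 + α))⁻¹ • A) 0 := by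
  have h := (mlHasFPowerSeriesAt hα A).hasDerivAt
  have : (mlSeries α A) 1 (fun _ => 1) = (Real.Gamma (1 + α))⁻¹ • A := by
    simp [mlSeries, ContinuousMultilinearMap.mkPiRing_apply, mlCoeff]
  rwa [this] at h

lemma opML_eq_mlSum {α : ℝ} (A : E →L[ℝ] E) {t : ℝ} (ht : 0 ≤ t) :
    opML α A t = mlSum α A (t ^ α) := by
  unfold opML mlSum
  congr 1
  funext n
  rw [mlCoeff, smul_smul]
  congr 1
  rw [← Real.rpow_natCast (t ^ α) n, ← Real.rpow_mul ht, mul_comm α (n : ℝ),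
    div_eq_mul_inv]

end Aux

/-- For `1 < α < 2`, two solution operators `S_α(t) = E_α(t^α A)`, `T_α(t) = E_α(t^α B)`
coincide for all `t ≥ 0` if and only if their generators coincide: `A = B` implies
`S_α = T_α`, and conversely. -/
theorem opML_inj {E : Type*} [NormedAddCommGroup E] [NormedSpace ℝ E] [CompleteSpace E]
    (α : ℝ) (hα₁ : 1 < α) (hα₂ : α < 2) (A B : E →L[ℝ] E) :
    (A = B → ∀ t ≥ (0 : ℝ), opML α A t = opML α B t) ∧
    ((∀ t ≥ (0 : ℝ), opML α A t = opML α B t) → A = B) := by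
  constructor
  · rintro rfl t _; rfl
  · intro h
    have hα0 : α ≠ 0 := by linarith
    have key : ∀ s ∈ Set.Ici (0 : ℝ), mlSum α A s = mlSum α B s := by
      intro s hs
      have hs' : (0 : ℝ) ≤ s := hs
      have ht : (0 : ℝ) ≤ s ^ α⁻¹ := Real.rpow_nonneg hs' _
      have := h (s ^ α⁻¹) ht
      rw [opML_eq_mlSum A ht, opML_eq_mlSum B ht, Real.rpow_inv_rpow hs' hα0] at this
      exact this
    have hA := (mlHasDerivAt hα₁ A).hasDerivWithinAt (s := Set.Ici (0 : ℝ))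
    have hB := (mlHasDerivAt hα₁ B).hasDerivWithinAt (s := Set.Ici (0 : ℝ))
    have hB' : HasDerivWithinAt (mlSum α A) ((Real.Gamma (1 + α))⁻¹ • B) (Set.Ici 0) 0 :=
      hB.congr key (key 0 (Set.mem_Ici.2 le_rfl))
    have hud : UniqueDiffWithinAt ℝ (Set.Ici (0 : ℝ)) 0 :=
      uniqueDiffOn_Ici 0 0 (Set.mem_Ici.2 le_rfl)
    have heq : (Real.Gamma (1 + α))⁻¹ • A = (Real.Gamma (1 + α))⁻¹ • B := by
      rw [← hA.derivWithin hud, ← hB'.derivWithin hud]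
    have hΓ : (Real.Gamma (1 + α))⁻¹ ≠ 0 :=
      inv_ne_zero (Real.Gamma_pos_of_pos (by linarith)).ne'
    exact smul_right_injective (E →L[ℝ] E) hΓ heq
end

section
/- Let 1 < α < 2, let E be a Banach space, A a bounded linear operator on E with ‖A‖ = ω, and u₀ ∈ E. Then u(t) = E_α(t^α A) u₀ satisfies ‖u(t)‖ ≤ C_α (1 + t) exp(ω^{1/α} t) ‖u₀‖ for all t ≥ 0, with C_α depending only on α. -/
open Real

lemma exp_eq_tsum_real (x : ℝ) : Real.exp x = ∑' n : ℕ, x ^ n / n.factorial := by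
  rw [Real.exp_eq_exp_ℝ, NormedSpace.exp_eq_tsum_div]

lemma gamma_lb (m : ℕ) (hm : 1 ≤ m) (θ : ℝ) (hθ0 : 0 ≤ θ) (hθ1 : θ < 1) :
    (m.factorial : ℝ) * ((m : ℝ) + θ) ^ θ ≤ Real.Gamma ((m : ℝ) + 1 + θ) := by
  have hm1 : (1 : ℝ) ≤ (m : ℝ) := by exact_mod_cast hm
  have ha : (0 : ℝ) < (m : ℝ) + θ := by linarith
  have hb : (0 : ℝ) < (m : ℝ) + 1 + θ := by linarith
  have hconv := Real.convexOn_log_Gamma.2 (Set.mem_Ioi.2 ha) (Set.mem_Ioi.2 hb)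
      hθ0 (by linarith : (0:ℝ) ≤ 1 - θ) (by ring)
  have hcomb : θ • ((m : ℝ) + θ) + (1 - θ) • ((m : ℝ) + 1 + θ) = (m : ℝ) + 1 := by
    simp [smul_eq_mul]; ring
  rw [hcomb] at hconv
  have hGa : 0 < Real.Gamma ((m : ℝ) + θ) := Real.Gamma_pos_of_pos ha
  have hGb : 0 < Real.Gamma ((m : ℝ) + 1 + θ) := Real.Gamma_pos_of_pos hb
  have hrec : Real.Gamma ((m : ℝ) + 1 + θ) = ((m : ℝ) + θ) * Real.Gamma ((m : ℝ) + θ) := by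
    have : (m : ℝ) + 1 + θ = ((m : ℝ) + θ) + 1 := by ring
    rw [this, Real.Gamma_add_one (ne_of_gt ha)]
  have hfact : Real.Gamma ((m : ℝ) + 1) = (m.factorial : ℝ) := Real.Gamma_nat_eq_factorial m
  simp only [Function.comp_apply, smul_eq_mul] at hconv
  -- hconv : log (Gamma (m+1)) ≤ θ * log (Gamma (m+θ)) + (1-θ) * log (Gamma (m+1+θ))
  have hlogGa : Real.log (Real.Gamma ((m : ℝ) + θ))
      = Real.log (Real.Gamma ((m : ℝ) + 1 + θ)) - Real.log ((m : ℝ) + θ) := by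
    rw [hrec, Real.log_mul (ne_of_gt ha) (ne_of_gt hGa)]; ring
  rw [hfact, hlogGa] at hconv
  have key : Real.log (m.factorial : ℝ) + θ * Real.log ((m : ℝ) + θ)
      ≤ Real.log (Real.Gamma ((m : ℝ) + 1 + θ)) := by nlinarith [hconv]
  have hfactpos : (0 : ℝ) < (m.factorial : ℝ) := by exact_mod_cast m.factorial_pos
  have hlhs : (0 : ℝ) < (m.factorial : ℝ) * ((m : ℝ) + θ) ^ θ :=
    mul_pos hfactpos (Real.rpow_pos_of_pos ha θ)
  rw [← Real.log_le_log_iff hlhs hGb]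
  rw [Real.log_mul (ne_of_gt hfactpos) (ne_of_gt (Real.rpow_pos_of_pos ha θ)),
    Real.log_rpow ha]
  exact key


lemma key_bound (s x : ℝ) (hs : 1 ≤ s) (hx : 0 ≤ x) :
    x ^ s / Real.Gamma (1 + s) ≤
      2 * (x ^ (⌊s⌋₊) / (⌊s⌋₊).factorial + x ^ (⌊s⌋₊ + 1) / ((⌊s⌋₊ + 1).factorial)) := by
  set m : ℕ := ⌊s⌋₊ with hm
  have hs0 : (0:ℝ) ≤ s := by linarith
  have hm1 : 1 ≤ m := Nat.le_floor (by exact_mod_cast hs)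
  have hmle : (m : ℝ) ≤ s := Nat.floor_le hs0
  have hslt : s < (m : ℝ) + 1 := Nat.lt_floor_add_one s
  set θ : ℝ := s - m with hθ
  have hθ0 : 0 ≤ θ := by simp [hθ]; linarith
  have hθ1 : θ < 1 := by simp [hθ]; linarith
  have hG := gamma_lb m hm1 θ hθ0 hθ1
  have h1s : (1:ℝ) + s = (m : ℝ) + 1 + θ := by simp [hθ]; ring
  have ha : (0:ℝ) < (m:ℝ) + θ := by
    have : (1:ℝ) ≤ (m:ℝ) := by exact_mod_cast hm1
    linarith
  have hfp : (0:ℝ) < (m.factorial : ℝ) := by exact_mod_cast m.factorial_pos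
  have hGpos : 0 < Real.Gamma (1 + s) := Real.Gamma_pos_of_pos (by linarith)
  have hlbpos : (0:ℝ) < (m.factorial : ℝ) * ((m : ℝ) + θ) ^ θ :=
    mul_pos hfp (Real.rpow_pos_of_pos ha θ)
  rw [h1s] at hGpos ⊢
  have hRHSpos : (0:ℝ) ≤ x ^ (m + 1) / ((m + 1).factorial) :=
    div_nonneg (pow_nonneg hx _) (by positivity)
  have hRHS1 : (0:ℝ) ≤ x ^ m / (m.factorial) :=
    div_nonneg (pow_nonneg hx _) (by positivity)
  rcases eq_or_lt_of_le hx with hx0 | hxpos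
  · -- x = 0
    have : x ^ s = 0 := by rw [← hx0]; exact Real.zero_rpow (by linarith)
    rw [this, zero_div]
    positivity
  · -- x > 0
    have hxs : x ^ s = x ^ m * x ^ θ := by
      rw [← Real.rpow_natCast x m, ← Real.rpow_add hxpos]
      congr 1
      simp [hθ]
    have step1 : x ^ s / Real.Gamma ((m : ℝ) + 1 + θ)
        ≤ x ^ m / m.factorial * (x / ((m:ℝ) + θ)) ^ θ := by
      rw [Real.div_rpow (le_of_lt hxpos) (le_of_lt ha), hxs]
      rw [div_le_iff₀ hGpos]
      have expand : x ^ m / ↑m.factorial * (x ^ θ / ((m:ℝ) + θ) ^ θ) *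
          ((m.factorial : ℝ) * ((m : ℝ) + θ) ^ θ) = x ^ m * x ^ θ := by
        field_simp
      calc x ^ m * x ^ θ
          = x ^ m / ↑m.factorial * (x ^ θ / ((m:ℝ) + θ) ^ θ) *
            ((m.factorial : ℝ) * ((m : ℝ) + θ) ^ θ) := expand.symm
        _ ≤ x ^ m / ↑m.factorial * (x ^ θ / ((m:ℝ) + θ) ^ θ) *
            Real.Gamma ((m : ℝ) + 1 + θ) := by
            apply mul_le_mul_of_nonneg_left hG
            positivity
    refine step1.trans ?_
    rcases le_or_gt x ((m:ℝ) + θ) with hle | hgt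
    · have hr1 : (x / ((m:ℝ) + θ)) ^ θ ≤ 1 := by
        apply Real.rpow_le_one (by positivity) _ hθ0
        rw [div_le_one ha]; exact hle
      have : x ^ m / ↑m.factorial * (x / ((m:ℝ) + θ)) ^ θ ≤ x ^ m / ↑m.factorial := by
        nlinarith [Real.rpow_nonneg (show (0:ℝ) ≤ x / ((m:ℝ)+θ) by positivity) θ]
      linarith
    · have hr1 : (1:ℝ) ≤ x / ((m:ℝ) + θ) := by rw [le_div_iff₀ ha]; linarith
      have hrθ : (x / ((m:ℝ) + θ)) ^ θ ≤ x / ((m:ℝ) + θ) := by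
        calc (x / ((m:ℝ) + θ)) ^ θ ≤ (x / ((m:ℝ) + θ)) ^ (1:ℝ) :=
              Real.rpow_le_rpow_of_exponent_le hr1 (le_of_lt hθ1)
          _ = x / ((m:ℝ) + θ) := Real.rpow_one _
      have step2 : x ^ m / ↑m.factorial * (x / ((m:ℝ) + θ)) ^ θ
          ≤ x ^ m / ↑m.factorial * (x / ((m:ℝ) + θ)) := by
        apply mul_le_mul_of_nonneg_left hrθ (by positivity)
      have hmhalf : ((m:ℝ) + 1) / ((m:ℝ) + θ) ≤ 2 := by
        rw [div_le_iff₀ ha]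
        have : (1:ℝ) ≤ (m:ℝ) := by exact_mod_cast hm1
        linarith
      have step3 : x ^ m / ↑m.factorial * (x / ((m:ℝ) + θ))
          ≤ 2 * (x ^ (m + 1) / ((m + 1).factorial)) := by
        have hfact : ((m+1).factorial : ℝ) = ((m:ℝ) + 1) * m.factorial := by
          rw [Nat.factorial_succ]; push_cast; ring
        rw [hfact, pow_succ]
        rw [div_mul_div_comm]
        rw [show (2:ℝ) * (x ^ m * x / (((m:ℝ) + 1) * ↑m.factorial))
            = (2 * (x ^ m * x)) / (((m:ℝ) + 1) * ↑m.factorial) by ring]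
        rw [div_le_div_iff₀ (by positivity) (by positivity)]
        have h2 : x ^ m * x * (((m:ℝ)+1) / ((m:ℝ)+θ)) ≤ x ^ m * x * 2 := by
          apply mul_le_mul_of_nonneg_left hmhalf (by positivity)
        calc x ^ m * x * (((m:ℝ) + 1) * ↑m.factorial)
            = (x ^ m * x * (((m:ℝ)+1) / ((m:ℝ)+θ))) * (↑m.factorial * ((m:ℝ)+θ)) := by
              field_simp
          _ ≤ (x ^ m * x * 2) * (↑m.factorial * ((m:ℝ)+θ)) := by
              apply mul_le_mul_of_nonneg_right h2 (by positivity)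
          _ = 2 * (x ^ m * x) * (↑m.factorial * ((m:ℝ) + θ)) := by ring
      linarith


lemma floor_mul_strictMono {α : ℝ} (hα : 1 < α) :
    StrictMono (fun n : ℕ => ⌊(n : ℝ) * α⌋₊) := by
  apply strictMono_nat_of_lt_succ
  intro n
  have hα0 : (0:ℝ) < α := by linarith
  have h0 : (0:ℝ) ≤ (n:ℝ) * α := by positivity
  have hle : (⌊(n:ℝ) * α⌋₊ : ℝ) ≤ (n:ℝ) * α := Nat.floor_le h0
  have hstep : ((⌊(n:ℝ) * α⌋₊ + 1 : ℕ) : ℝ) ≤ ((n+1 : ℕ) : ℝ) * α := by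
    push_cast; nlinarith
  have := Nat.le_floor hstep
  omega

/-- For `1 < α < 2` there is `C_α > 0` such that `u(t) = E_α(t^α A) u₀` satisfies
`‖u(t)‖ ≤ C_α (1+t) exp(‖A‖^{1/α} t) ‖u₀‖` for all bounded `A`, `u₀` and `t ≥ 0`. -/
theorem opML_growth {E : Type*} [NormedAddCommGroup E] [NormedSpace ℝ E] [CompleteSpace E]
    (α : ℝ) (hα₁ : 1 < α) (hα₂ : α < 2) :
    ∃ C > (0 : ℝ), ∀ (A : E →L[ℝ] E) (u₀ : E) (t : ℝ), 0 ≤ t →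
      ‖opML α A t u₀‖ ≤ C * (1 + t) * Real.exp (‖A‖ ^ (1 / α) * t) * ‖u₀‖ := by
  refine ⟨4, by norm_num, ?_⟩
  intro A u₀ t ht
  have hα0 : (0:ℝ) < α := by linarith
  set ω : ℝ := ‖A‖ with hω
  have hω0 : (0:ℝ) ≤ ω := norm_nonneg A
  set x : ℝ := ω ^ (1/α) * t with hxdef
  have hx0 : (0:ℝ) ≤ x := mul_nonneg (Real.rpow_nonneg hω0 _) ht
  set c : ℕ → ℝ := fun n => t ^ ((n : ℝ) * α) / Real.Gamma (1 + n * α) with hc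
  set b : ℕ → ℝ := fun n => x ^ ((n : ℝ) * α) / Real.Gamma (1 + n * α) with hb
  have hGpos : ∀ n : ℕ, 0 < Real.Gamma (1 + (n:ℝ) * α) := fun n =>
    Real.Gamma_pos_of_pos (by positivity)
  have hb0 : ∀ n, 0 ≤ b n := fun n =>
    div_nonneg (Real.rpow_nonneg hx0 _) (le_of_lt (hGpos n))
  have hc0 : ∀ n, 0 ≤ c n := fun n =>
    div_nonneg (Real.rpow_nonneg ht _) (le_of_lt (hGpos n))
  -- x^(nα) = t^(nα) * ω^n
  have hxeq : ∀ n : ℕ, x ^ ((n : ℝ) * α) = t ^ ((n : ℝ) * α) * ω ^ n := by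
    intro n
    have h1 : (ω ^ (1/α)) ^ ((n:ℝ) * α) = ω ^ (n:ℝ) := by
      rw [← Real.rpow_mul hω0]
      congr 1
      field_simp
    rw [hxdef, Real.mul_rpow (Real.rpow_nonneg hω0 _) ht, h1, Real.rpow_natCast,
      mul_comm]
  have hbc : ∀ n : ℕ, b n = c n * ω ^ n := by
    intro n
    simp only [hb, hc, hxeq n]
    ring
  -- floor sequence
  set m : ℕ → ℕ := fun n => ⌊(n : ℝ) * α⌋₊ with hm
  have hminj : Function.Injective m := (floor_mul_strictMono hα₁).injective
  have hm1inj : Function.Injective (fun n => m n + 1) := fun a b h =>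
    hminj (Nat.succ_injective h)
  set f : ℕ → ℝ := fun k => x ^ k / k.factorial with hf
  have hf0 : ∀ k, 0 ≤ f k := fun k => div_nonneg (pow_nonneg hx0 _) (by positivity)
  have hEsum : Summable f := Real.summable_pow_div_factorial x
  set g : ℕ → ℝ := fun n => 2 * (f (m n) + f (m n + 1)) with hg
  have hbg : ∀ n, b n ≤ g n := by
    intro n
    cases n with
    | zero =>
      have hb0' : b 0 = 1 := by
        simp [hb, Real.Gamma_one]
      have hm0 : m 0 = 0 := by simp [hm]
      have : g 0 = 2 * (1 + x) := by
        simp [hg, hf, hm0]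
      rw [hb0', this]
      nlinarith
    | succ k =>
      have hn1 : (1:ℝ) ≤ ((k+1 : ℕ) : ℝ) := by exact_mod_cast Nat.one_le_iff_ne_zero.2 (by omega)
      have hs : (1:ℝ) ≤ ((k+1 : ℕ) : ℝ) * α := by nlinarith
      have := key_bound (((k+1 : ℕ) : ℝ) * α) x hs hx0
      rw [hb, hg]
      simpa [hm, hf] using this
  have hcompm : Summable (fun n => f (m n)) := hEsum.comp_injective hminj
  have hcompm1 : Summable (fun n => f (m n + 1)) := hEsum.comp_injective hm1inj
  have hgsum : Summable g := by
    apply Summable.mul_left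
    exact hcompm.add hcompm1
  have hbsum : Summable b := Summable.of_nonneg_of_le hb0 hbg hgsum
  have hsum1 : ∑' n, f (m n) ≤ Real.exp x := by
    rw [exp_eq_tsum_real]
    exact Summable.tsum_le_tsum_of_inj m hminj (fun c _ => hf0 c) (fun n => le_rfl) hcompm hEsum
  have hsum2 : ∑' n, f (m n + 1) ≤ Real.exp x := by
    rw [exp_eq_tsum_real]
    exact Summable.tsum_le_tsum_of_inj _ hm1inj (fun c _ => hf0 c) (fun n => le_rfl) hcompm1 hEsum
  have htsumb : ∑' n, b n ≤ 4 * Real.exp x := by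
    have h1 : ∑' n, b n ≤ ∑' n, g n := Summable.tsum_le_tsum hbg hbsum hgsum
    have h2 : ∑' n, g n = 2 * ((∑' n, f (m n)) + ∑' n, f (m n + 1)) := by
      rw [hg, tsum_mul_left, Summable.tsum_add hcompm hcompm1]
    nlinarith
  -- operator estimates
  have hAn : ∀ n : ℕ, ‖A ^ n‖ ≤ ω ^ n := by
    intro n
    cases n with
    | zero => rw [pow_zero, pow_zero]; exact ContinuousLinearMap.norm_id_le
    | succ k => exact norm_pow_le' A k.succ_pos
  have hnormle : ∀ n : ℕ, ‖c n • A ^ n‖ ≤ b n := by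
    intro n
    have hns : ‖c n • A ^ n‖ = ‖c n‖ * ‖A ^ n‖ := norm_smul (c n) (A ^ n)
    rw [hns, Real.norm_of_nonneg (hc0 n), hbc n]
    exact mul_le_mul_of_nonneg_left (hAn n) (hc0 n)
  have hfsum : Summable (fun n => c n • A ^ n) :=
    Summable.of_norm_bounded hbsum hnormle
  have happly : opML α A t u₀ = ∑' n, (c n • A ^ n) u₀ := by
    have h := ContinuousLinearMap.map_tsum (ContinuousLinearMap.apply ℝ E u₀) hfsum
    simp only [ContinuousLinearMap.apply_apply] at h
    exact h
  have hterm : ∀ n, ‖(c n • A ^ n) u₀‖ ≤ b n * ‖u₀‖ := fun n =>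
    ((c n • A ^ n).le_opNorm u₀).trans
      (mul_le_mul_of_nonneg_right (hnormle n) (norm_nonneg u₀))
  have hnsum : Summable (fun n => ‖(c n • A ^ n) u₀‖) :=
    Summable.of_nonneg_of_le (fun n => norm_nonneg _) hterm (hbsum.mul_right _)
  calc ‖opML α A t u₀‖ = ‖∑' n, (c n • A ^ n) u₀‖ := by rw [happly]
    _ ≤ ∑' n, ‖(c n • A ^ n) u₀‖ := norm_tsum_le_tsum_norm hnsum
    _ ≤ ∑' n, b n * ‖u₀‖ := Summable.tsum_le_tsum hterm hnsum (hbsum.mul_right _)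
    _ = (∑' n, b n) * ‖u₀‖ := tsum_mul_right
    _ ≤ 4 * Real.exp x * ‖u₀‖ :=
        mul_le_mul_of_nonneg_right htsumb (norm_nonneg u₀)
    _ ≤ 4 * (1 + t) * Real.exp x * ‖u₀‖ := by
        have h0u : (0:ℝ) ≤ ‖u₀‖ := norm_nonneg u₀
        have hpos : 0 ≤ t * Real.exp x * ‖u₀‖ :=
          mul_nonneg (mul_nonneg ht (Real.exp_pos x).le) h0u
        nlinarith [hpos]
end

section
/- Let 1 < α < 2, E a Banach space, A bounded on E with ‖A‖ ≤ ω, and let ξ : [0,T] → E be continuous satisfying ‖ξ(t)‖ ≤ a + L M ∫_0^t (t-τ)^{α-1} ‖ξ(τ)‖ dτ for constants a, L, M ≥ 0. Then ‖ξ(t)‖ ≤ a E_α(L M Γ(α) t^α) for all t ∈ [0,T] (a fractional Gronwall inequality). -/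
open Real MeasureTheory intervalIntegral



lemma contRpowConst {q : ℝ} (hq : 0 ≤ q) : Continuous fun x : ℝ => x ^ q :=
  continuous_iff_continuousAt.2 fun x => Real.continuousAt_rpow_const x q (Or.inr hq)

lemma realBeta {p q : ℝ} (hp : 0 < p) (hq : 0 < q) :
    ∫ x in (0:ℝ)..1, x ^ (p - 1) * (1 - x) ^ (q - 1)
      = Real.Gamma p * Real.Gamma q / Real.Gamma (p + q) := by
  have h := Complex.Gamma_mul_Gamma_eq_betaIntegral (s := (p : ℂ)) (t := (q : ℂ))
    (by simpa using hp) (by simpa using hq)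
  have hβ : Complex.betaIntegral (p : ℂ) (q : ℂ)
      = ((∫ x in (0:ℝ)..1, x ^ (p - 1) * (1 - x) ^ (q - 1) : ℝ) : ℂ) := by
    rw [Complex.betaIntegral, ← intervalIntegral.integral_ofReal]
    refine intervalIntegral.integral_congr fun x hx => ?_
    rw [Set.uIcc_of_le (by norm_num : (0:ℝ) ≤ 1)] at hx
    rw [Complex.ofReal_mul, Complex.ofReal_cpow hx.1, Complex.ofReal_cpow (by linarith [hx.2])]
    push_cast
    ring_nf
  rw [hβ, ← Complex.ofReal_add, Complex.Gamma_ofReal, Complex.Gamma_ofReal,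
    Complex.Gamma_ofReal, ← Complex.ofReal_mul, ← Complex.ofReal_mul] at h
  have h' : Real.Gamma p * Real.Gamma q
      = Real.Gamma (p + q) * ∫ x in (0:ℝ)..1, x ^ (p - 1) * (1 - x) ^ (q - 1) :=
    mod_cast h
  have hG : Real.Gamma (p + q) ≠ 0 := (Real.Gamma_pos_of_pos (by linarith)).ne'
  field_simp [h']
  rw [h']
  ring


lemma betaConv {p q t : ℝ} (hp : 0 < p) (hq : 0 < q) (h1 : 1 < p + q) (ht : 0 ≤ t) :
    ∫ τ in (0:ℝ)..t, (t - τ) ^ (p - 1) * τ ^ (q - 1)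
      = Real.Gamma p * Real.Gamma q / Real.Gamma (p + q) * t ^ (p + q - 1) := by
  rcases eq_or_lt_of_le ht with h0 | h0
  · rw [← h0]
    rw [intervalIntegral.integral_same, Real.zero_rpow (by linarith), mul_zero]
  · have key := intervalIntegral.integral_comp_mul_left
      (fun τ => (t - τ) ^ (p - 1) * τ ^ (q - 1)) (c := t) h0.ne' (a := 0) (b := 1)
    rw [mul_zero, mul_one, smul_eq_mul] at key
    have key2 : ∫ τ in (0:ℝ)..t, (t - τ) ^ (p - 1) * τ ^ (q - 1)
        = t * ∫ x in (0:ℝ)..1, (t - t * x) ^ (p - 1) * (t * x) ^ (q - 1) := by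
      rw [key]; field_simp
    have hpt : ∀ x ∈ Set.uIcc (0:ℝ) 1, (t - t * x) ^ (p - 1) * (t * x) ^ (q - 1)
        = (t ^ (p - 1) * t ^ (q - 1)) * (x ^ (q - 1) * (1 - x) ^ (p - 1)) := by
      intro x hx
      rw [Set.uIcc_of_le (by norm_num : (0:ℝ) ≤ 1)] at hx
      rw [show t - t * x = t * (1 - x) by ring,
        Real.mul_rpow ht (by linarith [hx.2]), Real.mul_rpow ht hx.1]
      ring
    rw [key2, intervalIntegral.integral_congr hpt, intervalIntegral.integral_const_mul,
      realBeta hq hp, add_comm q p]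
    rw [show Real.Gamma p * Real.Gamma q / Real.Gamma (p + q) * t ^ (p + q - 1)
        = (Real.Gamma q * Real.Gamma p / Real.Gamma (p + q)) * (t * (t ^ (p - 1) * t ^ (q - 1)))
        by rw [← Real.rpow_add h0, show (p-1)+(q-1) = p+q-2 by ring,
               ← Real.rpow_one_add' ht (by intro hc; linarith), show 1+(p+q-2)=p+q-1 by ring]
           ring]
    ring


lemma mlSummable_s18 {α x : ℝ} (hα : 1 ≤ α) (hx : 0 ≤ x) :
    Summable fun n : ℕ => x ^ n / Real.Gamma (1 + n * α) := by
  refine Summable.of_nonneg_of_le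
    (fun n => div_nonneg (pow_nonneg hx n) (Real.Gamma_pos_of_pos (by positivity)).le)
    (fun n => ?_) (Real.summable_pow_div_factorial x)
  have hfac : (n.factorial : ℝ) ≤ Real.Gamma (1 + n * α) := by
    rcases Nat.eq_zero_or_pos n with h | h
    · subst h; simp [Real.Gamma_one]
    · have h1 : Real.Gamma ((n : ℝ) + 1) = n.factorial := by
        exact_mod_cast Real.Gamma_nat_eq_factorial n
      rw [← h1]
      have hn1 : (1:ℝ) ≤ (n:ℝ) := by exact_mod_cast h
      refine Real.Gamma_strictMonoOn_Ici.monotoneOn ?_ ?_ ?_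
      · simp only [Set.mem_Ici]; linarith
      · simp only [Set.mem_Ici]; nlinarith
      · nlinarith
  exact div_le_div_of_nonneg_left (pow_nonneg hx n) (by positivity) hfac

/-- One-parameter Mittag-Leffler function `E_α(x) = Σ_{n≥0} xⁿ/Γ(1+nα)`. -/
noncomputable def mittagLeffler (α x : ℝ) : ℝ :=
  ∑' n : ℕ, x ^ n / Real.Gamma (1 + n * α)

/-- Fractional Gronwall inequality: if `ξ : [0,T] → E` is continuous and
`‖ξ(t)‖ ≤ a + L M ∫_0^t (t-τ)^{α-1} ‖ξ(τ)‖ dτ` on `[0,T]`, then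
`‖ξ(t)‖ ≤ a E_α(L M Γ(α) t^α)` on `[0,T]`. -/
theorem fractional_gronwall {E : Type*} [NormedAddCommGroup E] [NormedSpace ℝ E]
    (α : ℝ) (hα₁ : 1 < α) (hα₂ : α < 2) (T : ℝ) (hT : 0 < T)
    (ξ : ℝ → E) (hξ : ContinuousOn ξ (Set.Icc 0 T))
    (a L M : ℝ) (ha : 0 ≤ a) (hL : 0 ≤ L) (hM : 0 ≤ M)
    (hbd : ∀ t ∈ Set.Icc (0:ℝ) T,
      ‖ξ t‖ ≤ a + L * M * ∫ τ in (0:ℝ)..t, (t - τ) ^ (α - 1) * ‖ξ τ‖) :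
    ∀ t ∈ Set.Icc (0:ℝ) T,
      ‖ξ t‖ ≤ a * mittagLeffler α (L * M * Real.Gamma α * t ^ α) := by
  set c := L * M with hc
  have hc0 : 0 ≤ c := mul_nonneg hL hM
  have hα0 : 0 < α := by linarith
  have hΓα : 0 < Real.Gamma α := Real.Gamma_pos_of_pos hα0
  obtain ⟨t₀, ht₀, hmax'⟩ := (isCompact_Icc : IsCompact (Set.Icc (0:ℝ) T)).exists_isMaxOn
    ⟨0, Set.mem_Icc.2 ⟨le_refl (0:ℝ), hT.le⟩⟩ hξ.norm
  have hmax : ∀ s ∈ Set.Icc (0:ℝ) T, ‖ξ s‖ ≤ ‖ξ t₀‖ := fun s hs => hmax' hs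
  set K := ‖ξ t₀‖ with hKdef
  have hK0 : 0 ≤ K := norm_nonneg _
  have hg : ∀ x : ℝ, 0 ≤ x → 0 < Real.Gamma (1 + x * α) := fun x hx =>
    Real.Gamma_pos_of_pos (by positivity)
  have hpow : ∀ (τ : ℝ), 0 ≤ τ → ∀ k : ℕ,
      (c * Real.Gamma α * τ ^ α) ^ k = (c * Real.Gamma α) ^ k * τ ^ ((k : ℝ) * α) := by
    intro τ hτ k
    rw [mul_pow, ← Real.rpow_natCast (τ ^ α) k, ← Real.rpow_mul hτ, mul_comm α (k : ℝ)]
  -- main induction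
  have key : ∀ n : ℕ, ∀ s ∈ Set.Icc (0:ℝ) T,
      ‖ξ s‖ ≤ a * (∑ k ∈ Finset.range n,
          (c * Real.Gamma α * s ^ α) ^ k / Real.Gamma (1 + k * α))
        + K * ((c * Real.Gamma α * s ^ α) ^ n / Real.Gamma (1 + n * α)) := by
    intro n
    induction n with
    | zero => intro s hs; simpa [Real.Gamma_one] using hmax s hs
    | succ n ih =>
      intro s hs
      obtain ⟨hs0, hsT⟩ := hs
      -- the majorant
      set F : ℝ → ℝ := fun τ =>
        (∑ k ∈ Finset.range n, (a * (c * Real.Gamma α) ^ k / Real.Gamma (1 + k * α))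
            * ((s - τ) ^ (α - 1) * τ ^ ((k : ℝ) * α)))
        + (K * (c * Real.Gamma α) ^ n / Real.Gamma (1 + n * α))
            * ((s - τ) ^ (α - 1) * τ ^ ((n : ℝ) * α)) with hF
      have hker : Continuous fun τ : ℝ => (s - τ) ^ (α - 1) :=
        (contRpowConst (by linarith : (0:ℝ) ≤ α - 1)).comp (continuous_const.sub continuous_id)
      have hcontk : ∀ k : ℕ, Continuous fun τ : ℝ => (s - τ) ^ (α - 1) * τ ^ ((k : ℝ) * α) :=
        fun k => hker.mul (contRpowConst (by positivity))
      have hcontF : Continuous F := by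
        refine Continuous.add (continuous_finset_sum _ fun k _ => ?_) ?_
        · exact continuous_const.mul (hcontk k)
        · exact continuous_const.mul (hcontk n)
      have hInt1 : IntervalIntegrable (fun τ => (s - τ) ^ (α - 1) * ‖ξ τ‖) volume 0 s := by
        apply ContinuousOn.intervalIntegrable
        apply hker.continuousOn.mul
        apply (hξ.norm).mono
        rw [Set.uIcc_of_le hs0]
        exact Set.Icc_subset_Icc le_rfl hsT
      have hmono : (∫ τ in (0:ℝ)..s, (s - τ) ^ (α - 1) * ‖ξ τ‖) ≤ ∫ τ in (0:ℝ)..s, F τ := by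
        refine intervalIntegral.integral_mono_on hs0 hInt1 (hcontF.intervalIntegrable _ _) ?_
        intro τ hτ
        have hξτ := ih τ ⟨hτ.1, hτ.2.trans hsT⟩
        simp only [hpow τ hτ.1] at hξτ
        have hkn : (0:ℝ) ≤ (s - τ) ^ (α - 1) := Real.rpow_nonneg (by linarith [hτ.2]) _
        calc (s - τ) ^ (α - 1) * ‖ξ τ‖
            ≤ (s - τ) ^ (α - 1) * (a * (∑ k ∈ Finset.range n,
                (c * Real.Gamma α) ^ k * τ ^ ((k:ℝ) * α) / Real.Gamma (1 + k * α))
              + K * ((c * Real.Gamma α) ^ n * τ ^ ((n:ℝ) * α) / Real.Gamma (1 + n * α))) :=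
              mul_le_mul_of_nonneg_left hξτ hkn
          _ = F τ := by
              rw [hF, mul_add]
              congr 1
              · rw [Finset.mul_sum, Finset.mul_sum]
                exact Finset.sum_congr rfl fun k _ => by ring
              · ring
      -- Beta computation
      have hJ : ∀ k : ℕ, (∫ τ in (0:ℝ)..s, (s - τ) ^ (α - 1) * τ ^ ((k : ℝ) * α))
          = Real.Gamma α * Real.Gamma (1 + k * α) / Real.Gamma (1 + ((k:ℝ) + 1) * α)
            * s ^ (((k:ℝ) + 1) * α) := by
        intro k
        have hb := betaConv (p := α) (q := (k:ℝ) * α + 1) hα0 (by positivity)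
          (by nlinarith [Nat.cast_nonneg (α := ℝ) k]) hs0
        rw [show α + ((k:ℝ) * α + 1) = 1 + ((k:ℝ) + 1) * α by ring] at hb
        rw [show (k:ℝ) * α + 1 - 1 = (k:ℝ) * α by ring] at hb
        rw [show 1 + ((k:ℝ) + 1) * α - 1 = ((k:ℝ) + 1) * α by ring] at hb
        rw [add_comm ((k:ℝ) * α) 1] at hb
        exact hb
      have hintk : ∀ k : ℕ, IntervalIntegrable
          (fun τ => (s - τ) ^ (α - 1) * τ ^ ((k : ℝ) * α)) volume 0 s :=
        fun k => (hcontk k).intervalIntegrable _ _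
      have hIntF : (∫ τ in (0:ℝ)..s, F τ)
          = (∑ k ∈ Finset.range n, (a * (c * Real.Gamma α) ^ k / Real.Gamma (1 + k * α))
              * (Real.Gamma α * Real.Gamma (1 + k * α) / Real.Gamma (1 + ((k:ℝ) + 1) * α)
                * s ^ (((k:ℝ) + 1) * α)))
            + (K * (c * Real.Gamma α) ^ n / Real.Gamma (1 + n * α))
              * (Real.Gamma α * Real.Gamma (1 + n * α) / Real.Gamma (1 + ((n:ℝ) + 1) * α)
                * s ^ (((n:ℝ) + 1) * α)) := by
        simp only [hF]
        have hIntSum : IntervalIntegrable (fun τ => ∑ k ∈ Finset.range n,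
            a * (c * Real.Gamma α) ^ k / Real.Gamma (1 + (k:ℝ) * α)
              * ((s - τ) ^ (α - 1) * τ ^ ((k:ℝ) * α))) volume 0 s :=
          (continuous_finset_sum _ fun k _ =>
            continuous_const.mul (hcontk k)).intervalIntegrable _ _
        rw [intervalIntegral.integral_add hIntSum ((hintk n).const_mul _)]
        rw [intervalIntegral.integral_finset_sum fun k _ => ((hintk k).const_mul _)]
        simp_rw [intervalIntegral.integral_const_mul, hJ]
      -- put everything together
      have step1 : ‖ξ s‖ ≤ a + c * ∫ τ in (0:ℝ)..s, F τ := by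
        refine (hbd s ⟨hs0, hsT⟩).trans ?_
        exact add_le_add_right (mul_le_mul_of_nonneg_left hmono hc0) a
      rw [hIntF] at step1
      refine step1.trans (le_of_eq ?_)
      rw [Finset.sum_range_succ']
      push_cast
      have hG0 : ∀ k : ℕ, Real.Gamma (1 + (k:ℝ) * α) ≠ 0 :=
        fun k => (hg (k:ℝ) (Nat.cast_nonneg k)).ne'
      have hG1 : ∀ k : ℕ, Real.Gamma (1 + ((k:ℝ) + 1) * α) ≠ 0 :=
        fun k => (Real.Gamma_pos_of_pos (by positivity)).ne'
      have hsum : c * (∑ k ∈ Finset.range n,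
            a * (c * Real.Gamma α) ^ k / Real.Gamma (1 + (k:ℝ) * α)
              * (Real.Gamma α * Real.Gamma (1 + (k:ℝ) * α) / Real.Gamma (1 + ((k:ℝ) + 1) * α)
                * s ^ (((k:ℝ) + 1) * α)))
          = ∑ k ∈ Finset.range n,
              a * ((c * Real.Gamma α * s ^ α) ^ (k + 1) / Real.Gamma (1 + ((k:ℝ) + 1) * α)) := by
        rw [Finset.mul_sum]
        refine Finset.sum_congr rfl fun k _ => ?_
        rw [hpow s hs0 (k + 1)]
        push_cast
        field_simp
        ring
      have hlast : c * (K * (c * Real.Gamma α) ^ n / Real.Gamma (1 + (n:ℝ) * α)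
            * (Real.Gamma α * Real.Gamma (1 + (n:ℝ) * α) / Real.Gamma (1 + ((n:ℝ) + 1) * α)
              * s ^ (((n:ℝ) + 1) * α)))
          = K * ((c * Real.Gamma α * s ^ α) ^ (n + 1) / Real.Gamma (1 + ((n:ℝ) + 1) * α)) := by
        rw [hpow s hs0 (n + 1)]
        push_cast
        field_simp
        ring
      rw [mul_add c, hsum, hlast]
      rw [show (c * Real.Gamma α * s ^ α) ^ (0:ℕ) / Real.Gamma (1 + 0 * α) = 1 by
        norm_num [Real.Gamma_one]]
      rw [mul_add a, mul_one, Finset.mul_sum]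
      ring
  intro t htI
  have ht0 : (0:ℝ) ≤ t := htI.1
  have hx : 0 ≤ c * Real.Gamma α * t ^ α := by positivity
  have hsumm := mlSummable_s18 (α := α) (x := c * Real.Gamma α * t ^ α) hα₁.le hx
  have hbound : ∀ n : ℕ, ‖ξ t‖ ≤ a * mittagLeffler α (c * Real.Gamma α * t ^ α)
      + K * ((c * Real.Gamma α * t ^ α) ^ n / Real.Gamma (1 + n * α)) := by
    intro n
    refine (key n t htI).trans (add_le_add_left ?_ _)
    refine mul_le_mul_of_nonneg_left ?_ ha
    simp only [mittagLeffler]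
    exact hsumm.sum_le_tsum (Finset.range n)
      (fun k _ => div_nonneg (pow_nonneg hx k) (hg (k:ℝ) (Nat.cast_nonneg k)).le)
  have hlim : Filter.Tendsto (fun n : ℕ => a * mittagLeffler α (c * Real.Gamma α * t ^ α)
      + K * ((c * Real.Gamma α * t ^ α) ^ n / Real.Gamma (1 + n * α))) Filter.atTop
      (nhds (a * mittagLeffler α (c * Real.Gamma α * t ^ α) + K * 0)) :=
    tendsto_const_nhds.add (hsumm.tendsto_atTop_zero.const_mul K)
  have hfin := ge_of_tendsto hlim (Filter.Eventually.of_forall hbound)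
  simpa using hfin
end
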